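/- arXiv:2301.10979 — 4 statements merged into one kernel-verified Lean document; each statement's English description precedes it below -/
import Mathlib

section
/- For every integer ℓ ≥ 0 and every real x with x ≤ 2ℓ/e², one has e^x < (1 + e^{-2ℓ}) · E_{2ℓ}(x), where E_n(x) = ∑_{k=0}^{n} x^k/k!. -/
open Finset

noncomputable def Etr (n : ℕ) (x : ℝ) : ℝ := ∑ k ∈ Finset.range (n + 1), x ^ k / (k.factorial : ℝ)

lemma hasSum_exp (x : ℝ) : HasSum (fun n : ℕ => x ^ n / n.factorial) (Real.exp x) := by
  rw [Real.exp_eq_exp_ℝ]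
  exact NormedSpace.expSeries_div_hasSum_exp x

-- single term ≤ exp, for x ≥ 0
lemma term_le_exp {x : ℝ} (hx : 0 ≤ x) (k : ℕ) : x ^ k / k.factorial ≤ Real.exp x := by
  calc x ^ k / k.factorial ≤ ∑ i ∈ range (k + 1), x ^ i / i.factorial := by
        exact Finset.single_le_sum (f := fun i => x ^ i / (i.factorial : ℝ))
          (fun i _ => by positivity) (self_mem_range_succ k)
    _ ≤ Real.exp x := Real.sum_le_exp_of_nonneg hx _

lemma hasDerivAt_Etr (n : ℕ) (x : ℝ) :
    HasDerivAt (fun y => Etr n y) (∑ k ∈ Finset.range n, x ^ k / (k.factorial : ℝ)) x := by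
  have h : HasDerivAt (fun y => Etr n y)
      (∑ k ∈ Finset.range (n+1), (↑k * x ^ (k-1)) / (k.factorial : ℝ)) x := by
    apply HasDerivAt.fun_sum
    intro k _
    simpa [div_eq_mul_inv, mul_comm] using ((hasDerivAt_pow k x).div_const (k.factorial : ℝ))
  convert h using 1
  rw [Finset.sum_range_succ']
  simp only [Nat.cast_zero, pow_zero, Nat.factorial_zero, zero_mul, Nat.cast_one, zero_div,
    add_zero]
  apply Finset.sum_congr rfl
  intro k _
  rw [Nat.factorial_succ]
  push_cast
  field_simp

lemma anti_Etr (ℓ : ℕ) : Antitone (fun x : ℝ => Etr (2 * ℓ) x * Real.exp (-x)) := by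
  apply antitone_of_deriv_nonpos
  · intro x
    exact ((hasDerivAt_Etr (2*ℓ) x).mul (((Real.hasDerivAt_exp (-x)).comp x
      ((hasDerivAt_id x).neg)))).differentiableAt
  · intro x
    have hd : HasDerivAt (fun x : ℝ => Etr (2 * ℓ) x * Real.exp (-x))
        ((∑ k ∈ Finset.range (2*ℓ), x ^ k / (k.factorial : ℝ)) * Real.exp (-x)
          + Etr (2*ℓ) x * (Real.exp (-x) * (-1))) x := by
      exact (hasDerivAt_Etr (2*ℓ) x).mul (((Real.hasDerivAt_exp (-x)).comp x
        ((hasDerivAt_id x).neg)))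
    rw [hd.deriv]
    have : Etr (2*ℓ) x = (∑ k ∈ Finset.range (2*ℓ), x ^ k / (k.factorial : ℝ))
        + x ^ (2*ℓ) / ((2*ℓ).factorial : ℝ) := by
      simp [Etr, Finset.sum_range_succ]
    rw [this]
    have hxp : 0 ≤ x ^ (2*ℓ) := (even_two_mul ℓ).pow_nonneg x
    have he : 0 < Real.exp (-x) := Real.exp_pos _
    have hf : (0:ℝ) < ((2*ℓ).factorial : ℝ) := by positivity
    nlinarith [mul_nonneg (div_nonneg hxp hf.le) he.le]

lemma endpoint (n : ℕ) (X : ℝ) (hX0 : 0 ≤ X) (hXle : X / (n + 1 : ℝ) ≤ Real.exp (-2)) :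
    Real.exp X < (1 + Real.exp (-(n : ℝ))) * Etr n X := by
  have hsum := hasSum_exp X
  have hsummable := hsum.summable
  have hsplit := Summable.sum_add_tsum_nat_add (f := fun k : ℕ => X ^ k / (k.factorial : ℝ)) (n+1) hsummable
  have hexp : Real.exp X = Etr n X + ∑' k : ℕ, X ^ (k + (n+1)) / ((k + (n+1)).factorial : ℝ) := by
    rw [← hsum.tsum_eq, ← hsplit]; rfl
  have hE1 : 1 ≤ Etr n X := by
    have := Finset.single_le_sum (f := fun k => X ^ k / (k.factorial : ℝ))
      (fun i _ => by positivity) (Finset.mem_range.2 (Nat.succ_pos n))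
    simpa [Etr] using this
  have hexp2 : (Real.exp (-2:ℝ)) ^ (n+1) = Real.exp (-((n:ℝ)+1) * 2) := by
    rw [← Real.exp_nat_mul]
    congr 1
    push_cast
    ring
  have hhead : X ^ (n+1) / ((n+1).factorial : ℝ) ≤ Real.exp (-((n:ℝ)+1)) := by
    have h1 : ((n:ℝ)+1) ^ (n+1) / ((n+1).factorial : ℝ) ≤ Real.exp ((n:ℝ)+1) := by
      have := term_le_exp (x := ((n+1:ℕ):ℝ)) (by positivity) (n+1)
      push_cast at this ⊢
      exact this
    have hfne : ((n+1).factorial : ℝ) ≠ 0 := by positivity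
    have hne : ((n:ℝ)+1) ≠ 0 := by positivity
    have key : X ^ (n+1) / ((n+1).factorial : ℝ)
        = (X / ((n:ℝ)+1)) ^ (n+1) * (((n:ℝ)+1) ^ (n+1) / ((n+1).factorial : ℝ)) := by
      rw [div_pow]
      field_simp
    rw [key]
    calc (X / ((n:ℝ)+1)) ^ (n+1) * (((n:ℝ)+1) ^ (n+1) / ((n+1).factorial : ℝ))
        ≤ (Real.exp (-2)) ^ (n+1) * Real.exp ((n:ℝ)+1) := by
          apply mul_le_mul (pow_le_pow_left₀ (by positivity) hXle _) h1 (by positivity)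
            (by positivity)
      _ = Real.exp (-((n:ℝ)+1)) := by
          rw [hexp2, ← Real.exp_add]
          congr 1
          ring
  have hterm : ∀ k : ℕ, X ^ (k + (n+1)) / ((k + (n+1)).factorial : ℝ)
      ≤ Real.exp (-((n:ℝ)+1)) * (Real.exp (-2)) ^ k := by
    intro k
    have hfact : ((n+1).factorial : ℝ) * ((n:ℝ)+1) ^ k ≤ (((k + (n+1)).factorial : ℕ) : ℝ) := by
      have h1 : (n+1).factorial * (n+1) ^ k ≤ (n+1).factorial * (n+2) ^ k :=
        Nat.mul_le_mul_left _ (Nat.pow_le_pow_left (by omega) k)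
      have h2 : (n+1).factorial * (n+2) ^ k ≤ ((n+1) + k).factorial :=
        Nat.factorial_mul_pow_le_factorial
      have h3 := le_trans h1 h2
      calc ((n+1).factorial : ℝ) * ((n:ℝ)+1) ^ k = (((n+1).factorial * (n+1) ^ k : ℕ) : ℝ) := by
            push_cast; ring
        _ ≤ (((n+1) + k).factorial : ℝ) := by exact_mod_cast h3
        _ = (((k + (n+1)).factorial : ℕ) : ℝ) := by rw [Nat.add_comm]
    have hfp : (0:ℝ) < ((n+1).factorial : ℝ) * ((n:ℝ)+1) ^ k := by positivity
    calc X ^ (k + (n+1)) / ((k + (n+1)).factorial : ℝ)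
        ≤ X ^ (k + (n+1)) / (((n+1).factorial : ℝ) * ((n:ℝ)+1) ^ k) := by
          apply div_le_div_of_nonneg_left (by positivity) hfp hfact
      _ = (X ^ (n+1) / ((n+1).factorial : ℝ)) * (X / ((n:ℝ)+1)) ^ k := by
          rw [pow_add, div_pow]; ring
      _ ≤ Real.exp (-((n:ℝ)+1)) * (Real.exp (-2)) ^ k := by
          apply mul_le_mul hhead (pow_le_pow_left₀ (by positivity) hXle _) (by positivity)
            (Real.exp_pos _).le
  have hgeo : Summable (fun k : ℕ => Real.exp (-((n:ℝ)+1)) * (Real.exp (-2)) ^ k) :=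
    Summable.mul_left _ (summable_geometric_of_lt_one (Real.exp_pos _).le
      (Real.exp_lt_one_iff.2 (by norm_num)))
  have htail : (∑' k : ℕ, X ^ (k + (n+1)) / ((k + (n+1)).factorial : ℝ))
      ≤ Real.exp (-((n:ℝ)+1)) * (1 - Real.exp (-2))⁻¹ := by
    calc (∑' k : ℕ, X ^ (k + (n+1)) / ((k + (n+1)).factorial : ℝ))
        ≤ ∑' k : ℕ, Real.exp (-((n:ℝ)+1)) * (Real.exp (-2)) ^ k :=
          Summable.tsum_le_tsum hterm ((summable_nat_add_iff (f := fun k : ℕ => X ^ k / (k.factorial : ℝ)) (n+1)).2 hsummable) hgeo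
      _ = Real.exp (-((n:ℝ)+1)) * (1 - Real.exp (-2))⁻¹ := by
          rw [tsum_mul_left, tsum_geometric_of_lt_one (Real.exp_pos _).le
            (Real.exp_lt_one_iff.2 (by norm_num))]
  have hnum : Real.exp (-((n:ℝ)+1)) * (1 - Real.exp (-2))⁻¹ < Real.exp (-(n:ℝ)) := by
    have he1 : (2:ℝ) < Real.exp 1 := by
      have := Real.exp_one_gt_d9; linarith
    have hm1 : Real.exp (-1:ℝ) < 1/2 := by
      rw [Real.exp_neg, inv_lt_comm₀ (Real.exp_pos 1) (by norm_num)]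
      linarith
    have hm2 : Real.exp (-2:ℝ) < 1/4 := by
      have h : Real.exp (-2:ℝ) = (Real.exp (-1:ℝ))^2 := by
        rw [← Real.exp_nat_mul]; norm_num
      rw [h]
      nlinarith [Real.exp_pos (-1:ℝ)]
    have h12 : (1 - Real.exp (-2:ℝ))⁻¹ < 2 := by
      rw [inv_lt_comm₀ (by linarith) (by norm_num)]
      linarith
    have hsplit2 : Real.exp (-((n:ℝ)+1)) = Real.exp (-(n:ℝ)) * Real.exp (-1:ℝ) := by
      rw [← Real.exp_add]; ring_nf
    rw [hsplit2]
    have hp : 0 < Real.exp (-(n:ℝ)) := Real.exp_pos _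
    calc Real.exp (-(n:ℝ)) * Real.exp (-1:ℝ) * (1 - Real.exp (-2:ℝ))⁻¹
        < Real.exp (-(n:ℝ)) * (1/2) * 2 := by
          apply mul_lt_mul' (le_of_lt (mul_lt_mul_of_pos_left hm1 hp)) h12
            (inv_nonneg.2 (by linarith)) (by positivity)
      _ = Real.exp (-(n:ℝ)) := by ring
  have hEtail : (∑' k : ℕ, X ^ (k + (n+1)) / ((k + (n+1)).factorial : ℝ))
      < Real.exp (-(n:ℝ)) * Etr n X := by
    calc (∑' k : ℕ, X ^ (k + (n+1)) / ((k + (n+1)).factorial : ℝ))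
        ≤ Real.exp (-((n:ℝ)+1)) * (1 - Real.exp (-2))⁻¹ := htail
      _ < Real.exp (-(n:ℝ)) := hnum
      _ ≤ Real.exp (-(n:ℝ)) * Etr n X := by
          nlinarith [Real.exp_pos (-(n:ℝ))]
  rw [hexp]
  nlinarith [Real.exp_pos (-(n:ℝ))]

open Finset in
/-- For every `ℓ ≥ 0` and real `x ≤ 2ℓ/e²`,
`e^x < (1 + e^{-2ℓ}) E_{2ℓ}(x)`. -/
theorem exp_lt_truncated_exp (ℓ : ℕ) (x : ℝ)
    (hx : x ≤ 2 * ℓ / (Real.exp 1) ^ 2) :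
    Real.exp x <
      (1 + Real.exp (-(2 * ℓ : ℝ))) *
        ∑ k ∈ Finset.range (2 * ℓ + 1), x ^ k / (k.factorial : ℝ) := by
  have hcast : ((2*ℓ : ℕ) : ℝ) = 2*(ℓ:ℝ) := by push_cast; ring
  set X : ℝ := 2 * ℓ / (Real.exp 1) ^ 2 with hXdef
  have hE : (0:ℝ) < (Real.exp 1)^2 := by positivity
  have hX0 : 0 ≤ X := by positivity
  have h2 : Real.exp (-2:ℝ) = ((Real.exp 1)^2)⁻¹ := by
    rw [Real.exp_neg]
    congr 1
    rw [← Real.exp_nat_mul]; norm_num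
  have hXle : X / (((2*ℓ:ℕ):ℝ) + 1) ≤ Real.exp (-2) := by
    rw [h2, hcast, hXdef]
    rw [div_div, inv_eq_one_div, div_le_div_iff₀ (by positivity) hE]
    nlinarith [hE]
  have hend := endpoint (2*ℓ) X hX0 hXle
  rw [hcast] at hend
  have hone : 1 < (1 + Real.exp (-(2*(ℓ:ℝ)))) * (Etr (2*ℓ) X * Real.exp (-X)) := by
    have h := mul_lt_mul_of_pos_right hend (Real.exp_pos (-X))
    have hinv : Real.exp X * Real.exp (-X) = 1 := by
      rw [← Real.exp_add]; simp
    calc (1:ℝ) = Real.exp X * Real.exp (-X) := hinv.symm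
      _ < (1 + Real.exp (-(2*(ℓ:ℝ)))) * Etr (2*ℓ) X * Real.exp (-X) := h
      _ = (1 + Real.exp (-(2*(ℓ:ℝ)))) * (Etr (2*ℓ) X * Real.exp (-X)) := by ring
  have hg : Etr (2*ℓ) X * Real.exp (-X) ≤ Etr (2*ℓ) x * Real.exp (-x) := anti_Etr ℓ hx
  have hone' : 1 < (1 + Real.exp (-(2*(ℓ:ℝ)))) * (Etr (2*ℓ) x * Real.exp (-x)) :=
    lt_of_lt_of_le hone (mul_le_mul_of_nonneg_left hg (by positivity))
  have hinvx : Real.exp (-x) * Real.exp x = 1 := by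
    rw [← Real.exp_add]; simp
  show Real.exp x < (1 + Real.exp (-(2 * (ℓ:ℝ)))) * Etr (2*ℓ) x
  calc Real.exp x = 1 * Real.exp x := by ring
    _ < ((1 + Real.exp (-(2*(ℓ:ℝ)))) * (Etr (2*ℓ) x * Real.exp (-x))) * Real.exp x :=
        mul_lt_mul_of_pos_right hone' (Real.exp_pos x)
    _ = (1 + Real.exp (-(2*(ℓ:ℝ)))) * Etr (2*ℓ) x * (Real.exp (-x) * Real.exp x) := by ring
    _ = (1 + Real.exp (-(2*(ℓ:ℝ)))) * Etr (2*ℓ) x := by rw [hinvx, mul_one]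
end

section
/- For all n ≥ 1, (n/e)^n √(2πn) exp(1/(12n+1)) < n! < (n/e)^n √(2πn) exp(1/(12n)). -/
open Real Filter Stirling
open scoped Topology

noncomputable def fs (n : ℕ) : ℝ := Real.log (Stirling.stirlingSeq n)

lemma fs_diff_lt (m : ℕ) :
    fs (m+1) - fs (m+2) < 1/(12*((m:ℝ)+1)) - 1/(12*((m:ℝ)+2)) := by
  have hsum := Stirling.log_stirlingSeq_diff_hasSum m
  set x2 : ℝ := ((1:ℝ) / (2 * (↑(m + 1) : ℝ) + 1)) ^ 2 with hx2
  have hNpos : (0:ℝ) < (m:ℝ) + 1 := by positivity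
  have hx2pos : 0 < x2 := by positivity
  have hx2lt : x2 < 1 := by
    rw [hx2]
    have : (1:ℝ) < 2 * (↑(m + 1) : ℝ) + 1 := by push_cast; nlinarith
    have h1 : (1:ℝ) / (2 * (↑(m + 1) : ℝ) + 1) < 1 := by
      rw [div_lt_one (by linarith)]; exact this
    nlinarith [div_nonneg (zero_le_one) (le_of_lt (lt_trans one_pos this))]
  have hgeo : HasSum (fun k : ℕ => (1/3 : ℝ) * x2 ^ (k+1)) ((x2/3) * (1-x2)⁻¹) := by
    have := (hasSum_geometric_of_lt_one hx2pos.le hx2lt).mul_left (x2/3)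
    have e : (fun k : ℕ => (1/3 : ℝ) * x2 ^ (k+1)) = fun i : ℕ => x2/3 * x2 ^ i := by
      funext k
      rw [pow_succ']
      ring
    rw [e]; exact this
  have hle : ∀ k : ℕ, (1 : ℝ) / (2 * ↑(k + 1) + 1) * x2 ^ (k+1) ≤ (1/3 : ℝ) * x2 ^ (k+1) := by
    intro k
    apply mul_le_mul_of_nonneg_right _ (by positivity)
    rw [div_le_div_iff₀ (by positivity) (by norm_num)]
    push_cast; linarith [Nat.cast_nonneg (α := ℝ) k]
  have hlt1 : (1 : ℝ) / (2 * ((1 + 1 : ℕ) : ℝ) + 1) * x2 ^ (1+1) < (1/3 : ℝ) * x2 ^ (1+1) := by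
    apply mul_lt_mul_of_pos_right _ (by positivity)
    norm_num
  have hmain : fs (m+1) - fs (m+2) < (x2/3) * (1-x2)⁻¹ := by
    have := hasSum_lt (i := 1) hle hlt1 hsum hgeo
    simpa [fs] using this
  refine hmain.trans_le (le_of_eq ?_)
  have h2 : (1:ℝ) - x2 ≠ 0 := by linarith
  rw [mul_inv_eq_iff_eq_mul₀ h2, hx2]
  have hm1 : ((m:ℝ)+1) ≠ 0 := by positivity
  have hm2 : ((m:ℝ)+2) ≠ 0 := by positivity
  have hc : (2*((m:ℝ)+1)+1) ≠ 0 := by positivity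
  push_cast
  field_simp
  ring

lemma lt_fs_diff (m : ℕ) :
    1/(12*((m:ℝ)+1)+1) - 1/(12*((m:ℝ)+2)+1) < fs (m+1) - fs (m+2) := by
  have hsum := Stirling.log_stirlingSeq_diff_hasSum m
  set x2 : ℝ := ((1:ℝ) / (2 * (↑(m + 1) : ℝ) + 1)) ^ 2 with hx2
  have hx2pos : 0 < x2 := by positivity
  have hind : HasSum (fun k : ℕ => if k = 0 then x2/3 else 0) (x2/3) := by
    simpa using hasSum_ite_eq 0 (x2/3)
  have hle : ∀ k : ℕ, (if k = 0 then x2/3 else 0) ≤ (1 : ℝ) / (2 * ↑(k + 1) + 1) * x2 ^ (k+1) := by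
    intro k
    rcases Nat.eq_zero_or_pos k with rfl | hk
    · push_cast
      norm_num
      linarith
    · have : k ≠ 0 := hk.ne'
      simp only [this, if_false]
      positivity
  have hlt1 : (if 1 = 0 then x2/3 else (0:ℝ)) < (1 : ℝ) / (2 * ((1 + 1 : ℕ) : ℝ) + 1) * x2 ^ (1+1) := by
    simp only [if_neg (by norm_num : (1:ℕ) ≠ 0)]
    positivity
  have hmain : x2/3 < fs (m+1) - fs (m+2) := by
    have := hasSum_lt (i := 1) hle hlt1 hind hsum
    simpa [fs] using this
  refine lt_trans ?_ hmain
  have h1 : (0:ℝ) < 12*((m:ℝ)+1)+1 := by positivity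
  have h2 : (0:ℝ) < 12*((m:ℝ)+2)+1 := by positivity
  have h3 : (0:ℝ) < 3*(2*((m:ℝ)+1)+1)^2 := by positivity
  have hx2eq : x2/3 = 1 / (3*(2*((m:ℝ)+1)+1)^2) := by
    rw [hx2]
    push_cast
    have hc : (2*((m:ℝ)+1)+1) ≠ 0 := by positivity
    field_simp
  rw [hx2eq, div_sub_div _ _ h1.ne' h2.ne', div_lt_div_iff₀ (by positivity) h3]
  nlinarith [Nat.cast_nonneg (α := ℝ) m]
  
noncomputable def gs (n : ℕ) : ℝ := fs n - 1/(12*(n:ℝ))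
noncomputable def hs (n : ℕ) : ℝ := fs n - 1/(12*(n:ℝ)+1)

lemma tendsto_fs : Tendsto fs atTop (𝓝 (Real.log (Real.sqrt π))) :=
  Stirling.tendsto_stirlingSeq_sqrt_pi.log (by positivity)

lemma tendsto_inv_12 : Tendsto (fun n : ℕ => 1/(12*(n:ℝ))) atTop (𝓝 0) := by
  have : Tendsto (fun n : ℕ => (12*(n:ℝ))) atTop atTop :=
    (tendsto_natCast_atTop_atTop).const_mul_atTop (by norm_num)
  exact this.inv_tendsto_atTop.congr fun n => (one_div _).symm

lemma tendsto_inv_12' : Tendsto (fun n : ℕ => 1/(12*(n:ℝ)+1)) atTop (𝓝 0) := by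
  have : Tendsto (fun n : ℕ => (12*(n:ℝ)+1)) atTop atTop :=
    (tendsto_natCast_atTop_atTop.const_mul_atTop (by norm_num : (0:ℝ) < 12)).atTop_add
      tendsto_const_nhds
  exact this.inv_tendsto_atTop.congr fun n => (one_div _).symm

lemma tendsto_gs : Tendsto gs atTop (𝓝 (Real.log (Real.sqrt π))) := by
  have h := tendsto_fs.sub tendsto_inv_12
  rw [sub_zero] at h
  exact h

lemma tendsto_hs : Tendsto hs atTop (𝓝 (Real.log (Real.sqrt π))) := by
  have h := tendsto_fs.sub tendsto_inv_12'
  rw [sub_zero] at h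
  exact h

lemma gs_step {m : ℕ} (hm : 1 ≤ m) : gs m < gs (m+1) := by
  obtain ⟨k, rfl⟩ : ∃ k, m = k + 1 := ⟨m - 1, (Nat.succ_pred_eq_of_pos hm).symm⟩
  show gs (k+1) < gs (k+2)
  have := fs_diff_lt k
  unfold gs
  push_cast
  linarith

lemma hs_step {m : ℕ} (hm : 1 ≤ m) : hs (m+1) < hs m := by
  obtain ⟨k, rfl⟩ : ∃ k, m = k + 1 := ⟨m - 1, (Nat.succ_pred_eq_of_pos hm).symm⟩
  show hs (k+2) < hs (k+1)
  have := lt_fs_diff k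
  unfold hs
  push_cast
  linarith

lemma gs_mono {a m : ℕ} (ha : 1 ≤ a) (h : a ≤ m) : gs a ≤ gs m := by
  induction m, h using Nat.le_induction with
  | base => exact le_rfl
  | succ m hm ih => exact ih.trans (gs_step (ha.trans hm)).le

lemma hs_anti {a m : ℕ} (ha : 1 ≤ a) (h : a ≤ m) : hs m ≤ hs a := by
  induction m, h using Nat.le_induction with
  | base => exact le_rfl
  | succ m hm ih => exact (hs_step (ha.trans hm)).le.trans ih

lemma gs_lt (n : ℕ) (hn : 1 ≤ n) : gs n < Real.log (Real.sqrt π) := by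
  have h1 : gs (n+1) ≤ Real.log (Real.sqrt π) :=
    ge_of_tendsto tendsto_gs (eventually_atTop.2 ⟨n+1, fun m hm => gs_mono (by omega) hm⟩)
  exact (gs_step hn).trans_le h1

lemma lt_hs (n : ℕ) (hn : 1 ≤ n) : Real.log (Real.sqrt π) < hs n := by
  have h1 : Real.log (Real.sqrt π) ≤ hs (n+1) :=
    le_of_tendsto tendsto_hs (eventually_atTop.2 ⟨n+1, fun m hm => hs_anti (by omega) hm⟩)
  exact h1.trans_lt (hs_step hn)

/-- Robbins' form of Stirling's formula: for `n ≥ 1`,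
`(n/e)^n √(2πn) e^{1/(12n+1)} < n! < (n/e)^n √(2πn) e^{1/(12n)}`. -/
theorem stirling_bounds (n : ℕ) (hn : 1 ≤ n) :
    ((n : ℝ) / Real.exp 1) ^ n * Real.sqrt (2 * Real.pi * n) *
        Real.exp (1 / (12 * n + 1)) < (n.factorial : ℝ) ∧
    (n.factorial : ℝ) < ((n : ℝ) / Real.exp 1) ^ n * Real.sqrt (2 * Real.pi * n) *
        Real.exp (1 / (12 * n)) := by
  have hnpos : (0:ℝ) < n := by exact_mod_cast hn
  have hspos : 0 < Stirling.stirlingSeq n := by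
    unfold Stirling.stirlingSeq
    positivity
  have hfac : (n.factorial : ℝ) =
      Stirling.stirlingSeq n * (Real.sqrt (2*n) * ((n:ℝ)/Real.exp 1)^n) := by
    unfold Stirling.stirlingSeq
    rw [div_mul_cancel₀]
    positivity
  have hsqrt : Real.sqrt π * Real.sqrt (2*n) = Real.sqrt (2*π*n) := by
    rw [← Real.sqrt_mul Real.pi_pos.le]
    ring_nf
  have hupper : Stirling.stirlingSeq n < Real.sqrt π * Real.exp (1/(12*n)) := by
    have := gs_lt n hn
    unfold gs fs at this
    have h2 : Real.log (Stirling.stirlingSeq n) < Real.log (Real.sqrt π) + 1/(12*(n:ℝ)) := by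
      linarith
    calc Stirling.stirlingSeq n = Real.exp (Real.log (Stirling.stirlingSeq n)) :=
          (Real.exp_log hspos).symm
      _ < Real.exp (Real.log (Real.sqrt π) + 1/(12*(n:ℝ))) := Real.exp_lt_exp.2 h2
      _ = Real.sqrt π * Real.exp (1/(12*n)) := by
          rw [Real.exp_add, Real.exp_log (by positivity)]
  have hlower : Real.sqrt π * Real.exp (1/(12*n+1)) < Stirling.stirlingSeq n := by
    have := lt_hs n hn
    unfold hs fs at this
    have h2 : Real.log (Real.sqrt π) + 1/(12*(n:ℝ)+1) < Real.log (Stirling.stirlingSeq n) := by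
      linarith
    calc Real.sqrt π * Real.exp (1/(12*n+1))
        = Real.exp (Real.log (Real.sqrt π) + 1/(12*(n:ℝ)+1)) := by
          rw [Real.exp_add, Real.exp_log (by positivity)]
      _ < Real.exp (Real.log (Stirling.stirlingSeq n)) := Real.exp_lt_exp.2 h2
      _ = Stirling.stirlingSeq n := Real.exp_log hspos
  have hQ : (0:ℝ) < Real.sqrt (2*n) * ((n:ℝ)/Real.exp 1)^n := by positivity
  constructor
  · calc ((n : ℝ) / Real.exp 1) ^ n * Real.sqrt (2 * Real.pi * n) * Real.exp (1 / (12 * n + 1))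
        = (Real.sqrt π * Real.exp (1/(12*n+1))) * (Real.sqrt (2*n) * ((n:ℝ)/Real.exp 1)^n) := by
          rw [← hsqrt]; ring
      _ < Stirling.stirlingSeq n * (Real.sqrt (2*n) * ((n:ℝ)/Real.exp 1)^n) := by
          exact mul_lt_mul_of_pos_right hlower hQ
      _ = (n.factorial : ℝ) := hfac.symm
  · calc (n.factorial : ℝ)
        = Stirling.stirlingSeq n * (Real.sqrt (2*n) * ((n:ℝ)/Real.exp 1)^n) := hfac
      _ < (Real.sqrt π * Real.exp (1/(12*n))) * (Real.sqrt (2*n) * ((n:ℝ)/Real.exp 1)^n) :=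
          mul_lt_mul_of_pos_right hupper hQ
      _ = ((n : ℝ) / Real.exp 1) ^ n * Real.sqrt (2 * Real.pi * n) * Real.exp (1 / (12 * n)) := by
          rw [← hsqrt]; ring
end

section
/- Let n be a positive even integer. Then ∑_{0 ≤ m ≤ n+1, 3 | (n+1+m)} 1/(m!·(n+1-m)!) ≤ ∑_{0 ≤ m ≤ n, 3 | (n+m)} 1/(m!·(n-m)!). -/
open Finset

private lemma sum_eq_aux (N : ℕ) (p : ℕ → Prop) [DecidablePred p] :
    ∑ m ∈ (Finset.range (N + 1)).filter p, (1 : ℝ) / (m.factorial * (N - m).factorial)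
      = (∑ m ∈ Finset.range (N + 1), if p m then N.choose m else 0 : ℕ) / N.factorial := by
  rw [Finset.sum_filter]
  push_cast
  rw [Finset.sum_div]
  refine Finset.sum_congr rfl fun m hm => ?_
  simp only [Finset.mem_range] at hm
  split
  · have h := Nat.choose_mul_factorial_mul_factorial (Nat.lt_succ_iff.mp hm)
    rw [div_eq_div_iff (by positivity) (by positivity), one_mul]
    rw [show (N.factorial : ℝ) = ((N.choose m * m.factorial * (N - m).factorial : ℕ) : ℝ) by
      rw [h]]
    push_cast
    ring
  · simp

private lemma key_aux (n : ℕ) :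
    (∑ m ∈ Finset.range (n + 1 + 1), if 3 ∣ n + 1 + m then (n + 1).choose m else 0)
      + (∑ m ∈ Finset.range (n + 1), if 3 ∣ n + m then n.choose m else 0) = 2 ^ n := by
  have h1 : (∑ m ∈ Finset.range (n + 1 + 1), if 3 ∣ n + 1 + m then (n + 1).choose m else 0)
      = (∑ i ∈ Finset.range (n + 1), if 3 ∣ n + 2 + i then n.choose i else 0)
        + ((if 3 ∣ n + 1 then 1 else 0)
          + ∑ i ∈ Finset.range (n + 1), if 3 ∣ n + 2 + i then n.choose (i + 1) else 0) := by
    rw [Finset.sum_range_succ' (fun m => if 3 ∣ n + 1 + m then (n + 1).choose m else 0) (n + 1)]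
    have e : ∀ i, (if 3 ∣ n + 1 + (i + 1) then (n + 1).choose (i + 1) else 0)
        = (if 3 ∣ n + 2 + i then n.choose i else 0)
          + (if 3 ∣ n + 2 + i then n.choose (i + 1) else 0) := by
      intro i
      rw [show n + 1 + (i + 1) = n + 2 + i from by ring, Nat.choose_succ_succ']
      split <;> simp
    simp only [e]
    rw [Finset.sum_add_distrib]
    have e0 : (if 3 ∣ n + 1 + 0 then (n + 1).choose 0 else 0) = (if 3 ∣ n + 1 then 1 else 0) := by
      simp
    rw [e0]
    omega
  have h3 : (if 3 ∣ n + 1 then 1 else 0)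
      + (∑ i ∈ Finset.range (n + 1), if 3 ∣ n + 2 + i then n.choose (i + 1) else 0)
      = ∑ m ∈ Finset.range (n + 1), if 3 ∣ n + 1 + m then n.choose m else 0 := by
    have h4 := Finset.sum_range_succ' (fun m => if 3 ∣ n + 1 + m then n.choose m else 0) (n + 1)
    have h5 := Finset.sum_range_succ (fun m => if 3 ∣ n + 1 + m then n.choose m else 0) (n + 1)
    simp only [show ∀ i, n + 1 + (i + 1) = n + 2 + i from fun i => by ring] at h4
    simp only [Nat.choose_succ_self, ite_self, add_zero, Nat.add_zero, Nat.choose_zero_right]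
      at h4 h5
    rw [show n + 1 + 1 = n + 2 from rfl] at h5
    omega
  rw [h1, h3, add_assoc]
  have h6 : ∀ i, (if 3 ∣ n + 2 + i then n.choose i else 0)
      + ((if 3 ∣ n + 1 + i then n.choose i else 0) + (if 3 ∣ n + i then n.choose i else 0))
      = n.choose i := by
    intro i
    generalize n.choose i = c
    split_ifs <;> omega
  calc (∑ i ∈ Finset.range (n + 1), if 3 ∣ n + 2 + i then n.choose i else 0)
        + ((∑ m ∈ Finset.range (n + 1), if 3 ∣ n + 1 + m then n.choose m else 0)
          + ∑ m ∈ Finset.range (n + 1), if 3 ∣ n + m then n.choose m else 0)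
      = ∑ i ∈ Finset.range (n + 1), ((if 3 ∣ n + 2 + i then n.choose i else 0)
          + ((if 3 ∣ n + 1 + i then n.choose i else 0) + (if 3 ∣ n + i then n.choose i else 0)))
        := by rw [Finset.sum_add_distrib, Finset.sum_add_distrib]
    _ = ∑ i ∈ Finset.range (n + 1), n.choose i := by
        exact Finset.sum_congr rfl fun i _ => h6 i
    _ = 2 ^ n := Nat.sum_range_choose n

open Finset in
/-- For a positive even integer `n`,
`∑_{0 ≤ m ≤ n+1, 3 ∣ n+1+m} 1/(m!(n+1-m)!) ≤ ∑_{0 ≤ m ≤ n, 3 ∣ n+m} 1/(m!(n-m)!)`. -/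
theorem factorial_sum_three_dvd_even (n : ℕ) (hpos : 0 < n) (heven : Even n) :
    ∑ m ∈ (Finset.range (n + 2)).filter (fun m => 3 ∣ n + 1 + m),
        (1 : ℝ) / (m.factorial * (n + 1 - m).factorial) ≤
      ∑ m ∈ (Finset.range (n + 1)).filter (fun m => 3 ∣ n + m),
        (1 : ℝ) / (m.factorial * (n - m).factorial) := by
  obtain ⟨k, rfl⟩ := heven
  have hk : 1 ≤ k := by omega
  set S : ℕ := ∑ m ∈ Finset.range (k + k + 1), if 3 ∣ k + k + m then (k + k).choose m else 0
    with hSdef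
  set T : ℕ := ∑ m ∈ Finset.range (k + k + 1 + 1),
      if 3 ∣ k + k + 1 + m then (k + k + 1).choose m else 0 with hTdef
  have hkey : T + S = 2 ^ (k + k) := key_aux (k + k)
  have hC : (k + k).choose k ≤ S := by
    have hmem : k ∈ Finset.range (k + k + 1) := by simp
    have h := Finset.single_le_sum
      (f := fun m => if 3 ∣ k + k + m then (k + k).choose m else 0)
      (fun i _ => Nat.zero_le _) hmem
    simpa [show (3:ℕ) ∣ k + k + k from ⟨k, by ring⟩] using h
  have hpow : 2 ^ (k + k) ≤ (k + k + 2) * S := by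
    have h4 : 4 ^ k ≤ 2 * k * Nat.centralBinom k :=
      Nat.four_pow_le_two_mul_self_mul_centralBinom k hk
    have hcb : Nat.centralBinom k = (k + k).choose k := by
      rw [Nat.centralBinom, two_mul]
    have h2 : (2:ℕ) ^ (k + k) = 4 ^ k := by
      rw [← two_mul, pow_mul]; norm_num
    calc (2:ℕ) ^ (k + k) = 4 ^ k := h2
      _ ≤ 2 * k * Nat.centralBinom k := h4
      _ ≤ (k + k + 2) * S := by
          apply Nat.mul_le_mul (by omega)
          rw [hcb]; exact hC
  have hTS : T ≤ (k + k + 1) * S := by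
    have h1 : T + S ≤ (k + k + 1) * S + S := by
      rw [hkey]
      calc 2 ^ (k + k) ≤ (k + k + 2) * S := hpow
        _ = (k + k + 1) * S + S := by ring
    exact Nat.le_of_add_le_add_right h1
  have L := sum_eq_aux (k + k + 1) (fun m => 3 ∣ k + k + 1 + m)
  have R := sum_eq_aux (k + k) (fun m => 3 ∣ k + k + m)
  rw [show k + k + 2 = k + k + 1 + 1 from by omega]
  rw [L, R]
  rw [div_le_div_iff₀ (by positivity) (by positivity)]
  have hfin : T * (k + k).factorial ≤ S * (k + k + 1).factorial := by
    calc T * (k + k).factorial ≤ ((k + k + 1) * S) * (k + k).factorial :=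
          Nat.mul_le_mul_right _ hTS
      _ = S * ((k + k + 1) * (k + k).factorial) := by ring
      _ = S * (k + k + 1).factorial := by rw [Nat.factorial_succ]
  exact_mod_cast hfin
end

section
/- Let n ≥ 3 be an odd integer. Then ∑_{0 ≤ m ≤ n+1, 3 | (n+1+m)} 1/(m!·(n+1-m)!) ≤ ∑_{0 ≤ m ≤ n, 3 | (n+m)} 1/(m!·(n-m)!). -/
open Finset

private def ff (n : ℕ) : ℕ :=
  ∑ m ∈ (Finset.range (n + 1)).filter (fun m => 3 ∣ n + m), n.choose m

private lemma ff_key (n : ℕ) : ff n + ff (n + 1) = 2 ^ n := by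
  have h1 : ff (n + 1) =
      (∑ m ∈ Finset.range (n + 1), if 3 ∣ n + 2 + m then n.choose m else 0)
      + (∑ m ∈ Finset.range (n + 1), if 3 ∣ n + 1 + m then n.choose m else 0) := by
    have hsplit : ff (n + 1) =
        (∑ k ∈ Finset.range (n + 1),
          ((if 3 ∣ n + 2 + k then n.choose k else 0)
            + (if 3 ∣ n + 2 + k then n.choose (k + 1) else 0)))
        + (if 3 ∣ n + 1 then 1 else 0) := by
      rw [ff, Finset.sum_filter, Finset.sum_range_succ']
      congr 1
      · refine Finset.sum_congr rfl fun k _ => ?_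
        have hc : (n + 1).choose (k + 1) = n.choose k + n.choose (k + 1) :=
          Nat.choose_succ_succ n k
        have hcond : (3 ∣ n + 1 + (k + 1)) ↔ (3 ∣ n + 2 + k) := by omega
        rw [hc]
        by_cases h : 3 ∣ n + 2 + k
        · rw [if_pos h, if_pos (hcond.mpr h), if_pos h]
        · rw [if_neg h, if_neg (fun hh => h (hcond.mp hh)), if_neg h]; simp
    rw [hsplit, Finset.sum_add_distrib]
    have hB : (∑ k ∈ Finset.range (n + 1), if 3 ∣ n + 2 + k then n.choose (k + 1) else 0)
        + (if 3 ∣ n + 1 then 1 else 0)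
        = ∑ m ∈ Finset.range (n + 1), if 3 ∣ n + 1 + m then n.choose m else 0 := by
      have h2 : ∑ m ∈ Finset.range (n + 2), (if 3 ∣ n + 1 + m then n.choose m else 0)
          = (∑ k ∈ Finset.range (n + 1), if 3 ∣ n + 1 + (k + 1) then n.choose (k + 1) else 0)
            + (if 3 ∣ n + 1 + 0 then n.choose 0 else 0) :=
        Finset.sum_range_succ' _ _
      have h3 : ∑ m ∈ Finset.range (n + 2), (if 3 ∣ n + 1 + m then n.choose m else 0)
          = (∑ m ∈ Finset.range (n + 1), if 3 ∣ n + 1 + m then n.choose m else 0)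
            + (if 3 ∣ n + 1 + (n + 1) then n.choose (n + 1) else 0) :=
        Finset.sum_range_succ _ _
      have hz : n.choose (n + 1) = 0 := Nat.choose_eq_zero_of_lt (by omega)
      have hcongr : (∑ k ∈ Finset.range (n + 1), if 3 ∣ n + 1 + (k + 1) then n.choose (k + 1) else 0)
          = ∑ k ∈ Finset.range (n + 1), if 3 ∣ n + 2 + k then n.choose (k + 1) else 0 := by
        refine Finset.sum_congr rfl fun k _ => ?_
        have hcond : (3 ∣ n + 1 + (k + 1)) ↔ (3 ∣ n + 2 + k) := by omega
        by_cases h : 3 ∣ n + 2 + k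
        · rw [if_pos h, if_pos (hcond.mpr h)]
        · rw [if_neg h, if_neg (fun hh => h (hcond.mp hh))]
      rw [hcongr] at h2
      have : (if 3 ∣ n + 1 + 0 then n.choose 0 else 0) = (if 3 ∣ n + 1 then 1 else 0) := by
        simp
      rw [this] at h2
      rw [hz] at h3
      simp only [ite_self] at h3
      omega
    omega
  have h2 : ff n + ff (n + 1)
      = ∑ m ∈ Finset.range (n + 1), n.choose m := by
    rw [h1, ff, Finset.sum_filter, ← Finset.sum_add_distrib, ← Finset.sum_add_distrib]
    refine Finset.sum_congr rfl fun m _ => ?_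
    have h0 : 3 ∣ n + m ∨ 3 ∣ n + 2 + m ∨ 3 ∣ n + 1 + m := by omega
    have hne1 : ¬ (3 ∣ n + m ∧ 3 ∣ n + 1 + m) := by omega
    have hne2 : ¬ (3 ∣ n + m ∧ 3 ∣ n + 2 + m) := by omega
    have hne3 : ¬ (3 ∣ n + 1 + m ∧ 3 ∣ n + 2 + m) := by omega
    split_ifs with ha hb hb hc hc <;> omega
  rw [h2, Nat.sum_range_choose]

private lemma ff_one : ff 1 = 0 := by decide

private lemma ff_odd : ∀ k : ℕ, 3 * ff (2 * k + 1) + 2 = 2 ^ (2 * k + 1) := by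
  intro k
  induction k with
  | zero => simp [ff_one]
  | succ k ih =>
    have k1 := ff_key (2 * k + 1)
    have k2 := ff_key (2 * k + 2)
    have e1 : 2 * k + 1 + 1 = 2 * k + 2 := by omega
    have e2 : 2 * k + 2 + 1 = 2 * (k + 1) + 1 := by omega
    rw [e1] at k1
    rw [e2] at k2
    have p1 : 2 ^ (2 * k + 2) = 2 * 2 ^ (2 * k + 1) := by ring
    have p2 : 2 ^ (2 * (k + 1) + 1) = 4 * 2 ^ (2 * k + 1) := by ring
    omega

private lemma sum_eq_ff (n : ℕ) :
    ∑ m ∈ (Finset.range (n + 1)).filter (fun m => 3 ∣ n + m),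
      (1 : ℝ) / (m.factorial * (n - m).factorial) = (ff n : ℝ) / n.factorial := by
  rw [ff, Nat.cast_sum, Finset.sum_div]
  refine Finset.sum_congr rfl fun m hm => ?_
  have hmn : m ≤ n := by
    have := Finset.mem_range.mp (Finset.mem_filter.mp hm).1
    omega
  have hfac : n.choose m * m.factorial * (n - m).factorial = n.factorial :=
    Nat.choose_mul_factorial_mul_factorial hmn
  have hm0 : (m.factorial : ℝ) ≠ 0 := by positivity
  have hn0 : ((n - m).factorial : ℝ) ≠ 0 := by positivity
  have hnf : (n.factorial : ℝ) ≠ 0 := by positivity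
  rw [div_eq_div_iff (by positivity) (by positivity)]
  have := congrArg (fun x : ℕ => (x : ℝ)) hfac
  push_cast at this ⊢
  linarith [this]

private lemma two_pow_ge (n : ℕ) (hn : 3 ≤ n) : n + 2 ≤ 2 ^ n := by
  induction n with
  | zero => omega
  | succ n ih =>
    rcases Nat.lt_or_ge n 3 with h | h
    · interval_cases n <;> simp_all
    · have := ih h
      have : 2 ^ (n + 1) = 2 * 2 ^ n := by ring
      omega

open Finset in
/-- For an odd integer `n ≥ 3`,
`∑_{0 ≤ m ≤ n+1, 3 ∣ n+1+m} 1/(m!(n+1-m)!) ≤ ∑_{0 ≤ m ≤ n, 3 ∣ n+m} 1/(m!(n-m)!)`. -/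
theorem factorial_sum_three_dvd_odd (n : ℕ) (hn : 3 ≤ n) (hodd : Odd n) :
    ∑ m ∈ (Finset.range (n + 2)).filter (fun m => 3 ∣ n + 1 + m),
        (1 : ℝ) / (m.factorial * (n + 1 - m).factorial) ≤
      ∑ m ∈ (Finset.range (n + 1)).filter (fun m => 3 ∣ n + m),
        (1 : ℝ) / (m.factorial * (n - m).factorial) := by
  have hL := sum_eq_ff (n + 1)
  have hR := sum_eq_ff n
  rw [hL, hR]
  obtain ⟨k, hk⟩ := hodd
  have hf : 3 * ff n + 2 = 2 ^ n := by rw [hk]; exact ff_odd k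
  have hkey := ff_key n
  have hp : n + 2 ≤ 2 ^ n := two_pow_ge n hn
  -- main natural-number inequality
  have hmain : ff (n + 1) ≤ (n + 1) * ff n := by
    have hA : (n + 1) * (3 * ff n) + (n + 1) * 2 = (n + 1) * 2 ^ n := by
      rw [← Nat.mul_add, hf]
    have hQ : 4 * 2 ^ n ≤ (n + 1) * 2 ^ n := Nat.mul_le_mul_right _ (by omega)
    have hB : 3 * ((n + 1) * ff n) = (n + 1) * (3 * ff n) := by ring
    omega
  have hfacpos : (0 : ℝ) < (n.factorial : ℝ) := by positivity
  have hfacpos1 : (0 : ℝ) < ((n + 1).factorial : ℝ) := by positivity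
  rw [div_le_div_iff₀ hfacpos1 hfacpos]
  have hnat : ff (n + 1) * n.factorial ≤ ff n * (n + 1).factorial := by
    calc ff (n + 1) * n.factorial ≤ (n + 1) * ff n * n.factorial :=
          Nat.mul_le_mul_right _ hmain
      _ = ff n * (n + 1).factorial := by rw [Nat.factorial_succ]; ring
  exact_mod_cast hnat
end
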